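/- For n = 0, the group B_{2^k·1} = ⟨x, y | x^{2^k} = y = 1, xyx^{-1} = y^{-1}⟩ is isomorphic to the cyclic group Z/2^k, and for k = 2, the group B_{4(2n+1)} = ⟨x, y | x^4 = y^{2n+1} = 1, xyx^{-1} = y^{-1}⟩ is isomorphic to the generalized quaternion group Q_{4(2n+1)} = ⟨a, b | a^{2n+1} = b^2, aba = b⟩. -/

import Mathlib

/-- Relators for `B_{2ᵏ(2n+1)} = ⟨x, y | x^(2ᵏ) = y^(2n+1) = 1, xyx⁻¹ = y⁻¹⟩`,
with generator `0 = x`, `1 = y`. -/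
def bRels (k n : ℕ) : Set (FreeGroup (Fin 2)) :=
  {FreeGroup.of 0 ^ (2 ^ k),
   FreeGroup.of 1 ^ (2 * n + 1),
   FreeGroup.of 0 * FreeGroup.of 1 * (FreeGroup.of 0)⁻¹ * FreeGroup.of 1}

/-- The group `B_{2ᵏ(2n+1)}`. -/
abbrev BGrp (k n : ℕ) := PresentedGroup (bRels k n)

/-- Relators for the generalized quaternion group
`Q_{4m} = ⟨a, b | aᵐ = b², aba = b⟩`, with generator `0 = a`, `1 = b`. -/
def quaternionRels (m : ℕ) : Set (FreeGroup (Fin 2)) :=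
  {FreeGroup.of 0 ^ m * ((FreeGroup.of 1) ^ 2)⁻¹,
   FreeGroup.of 0 * FreeGroup.of 1 * FreeGroup.of 0 * (FreeGroup.of 1)⁻¹}

/-- The generalized quaternion group `Q_{4m}`. -/
abbrev QuatGrp (m : ℕ) := PresentedGroup (quaternionRels m)

lemma relMk {α : Type*} {rels : Set (FreeGroup α)} {r : FreeGroup α} (h : r ∈ rels) :
    PresentedGroup.mk rels r = 1 :=
  (QuotientGroup.eq_one_iff r).mpr (Subgroup.subset_normalClosure h)

-- relations in BGrp
lemma b_rel1 (k n : ℕ) : (PresentedGroup.of 0 : BGrp k n) ^ (2 ^ k) = 1 := by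
  have := relMk (Set.mem_insert _ _ : _ ∈ bRels k n)
  rwa [map_pow] at this

lemma b_rel2 (k n : ℕ) : (PresentedGroup.of 1 : BGrp k n) ^ (2 * n + 1) = 1 := by
  have := relMk (Set.mem_insert_of_mem _ (Set.mem_insert _ _) : _ ∈ bRels k n)
  rwa [map_pow] at this

lemma b_rel3 (k n : ℕ) :
    (PresentedGroup.of 0 : BGrp k n) * PresentedGroup.of 1 * (PresentedGroup.of 0)⁻¹ =
      (PresentedGroup.of 1)⁻¹ := by
  have := relMk (rels := bRels k n) (Set.mem_insert_of_mem _ (Set.mem_insert_of_mem _ rfl) : _ ∈ bRels k n)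
  rw [map_mul, map_mul, map_mul, map_inv] at this
  exact eq_inv_of_mul_eq_one_left (by simpa [mul_assoc, PresentedGroup.of] using this)

-- relations in QuatGrp
lemma q_rel1 (m : ℕ) :
    (PresentedGroup.of 0 : QuatGrp m) ^ m = (PresentedGroup.of 1) ^ 2 := by
  have := relMk (Set.mem_insert _ _ : _ ∈ quaternionRels m)
  rw [map_mul, map_inv, map_pow, map_pow, mul_inv_eq_one] at this
  exact this

lemma q_rel2 (m : ℕ) :
    (PresentedGroup.of 0 : QuatGrp m) * PresentedGroup.of 1 * PresentedGroup.of 0 =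
      PresentedGroup.of 1 := by
  have := relMk (Set.mem_insert_of_mem _ rfl : _ ∈ quaternionRels m)
  rw [map_mul, map_mul, map_mul, map_inv, mul_inv_eq_one] at this
  exact this

section Quat
variable (m : ℕ)

local notation "a" => (PresentedGroup.of 0 : QuatGrp m)
local notation "b" => (PresentedGroup.of 1 : QuatGrp m)

lemma q_semiconj : SemiconjBy b a ((PresentedGroup.of 0 : QuatGrp m)⁻¹) := by
  have h := q_rel2 m
  show b * a = a⁻¹ * b
  have : a⁻¹ * b = b * a := by
    conv_lhs => rw [← h]
    group
  rw [this]

lemma q_conj_pow (j : ℕ) :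
    b * a ^ j * (PresentedGroup.of 1 : QuatGrp m)⁻¹ = ((PresentedGroup.of 0 : QuatGrp m) ^ j)⁻¹ := by
  have h := ((q_semiconj m).pow_right j).eq
  rw [inv_pow] at h
  rw [h]
  group

lemma q_b4 : (PresentedGroup.of 1 : QuatGrp m) ^ 4 = 1 := by
  have h := q_conj_pow m m
  rw [q_rel1 m] at h
  have h1 : b * b ^ 2 * (PresentedGroup.of 1 : QuatGrp m)⁻¹ = b ^ 2 := by group
  rw [h1] at h
  have h2 : (PresentedGroup.of 1 : QuatGrp m) ^ 2 * b ^ 2 = 1 := mul_eq_one_iff_eq_inv.mpr h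
  calc (PresentedGroup.of 1 : QuatGrp m) ^ 4 = b ^ 2 * b ^ 2 := by group
    _ = 1 := h2

lemma q_a2m : (PresentedGroup.of 0 : QuatGrp m) ^ (2 * m) = 1 := by
  have h : (PresentedGroup.of 0 : QuatGrp m) ^ (2 * m) = (a ^ m) ^ 2 := by
    rw [← pow_mul, mul_comm]
  rw [h, q_rel1 m, ← pow_mul]
  exact q_b4 m

end Quat

section BG
variable (k n : ℕ)

local notation "x" => (PresentedGroup.of 0 : BGrp k n)
local notation "y" => (PresentedGroup.of 1 : BGrp k n)

lemma b_semiconj : SemiconjBy x y ((PresentedGroup.of 1 : BGrp k n)⁻¹) := by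
  have h := b_rel3 k n
  show x * y = y⁻¹ * x
  exact mul_inv_eq_iff_eq_mul.mp h

lemma b_conj_pow (j : ℕ) :
    x * y ^ j * (PresentedGroup.of 0 : BGrp k n)⁻¹ = ((PresentedGroup.of 1 : BGrp k n) ^ j)⁻¹ := by
  have h := ((b_semiconj k n).pow_right j).eq
  rw [inv_pow] at h
  rw [h]
  group

lemma b_central (j : ℕ) :
    Commute ((PresentedGroup.of 0 : BGrp k n) ^ 2) ((PresentedGroup.of 1 : BGrp k n) ^ j) := by
  have h := b_rel3 k n
  have hinv : x * (PresentedGroup.of 1 : BGrp k n)⁻¹ * (PresentedGroup.of 0 : BGrp k n)⁻¹ = y := by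
    calc x * (PresentedGroup.of 1 : BGrp k n)⁻¹ * (PresentedGroup.of 0 : BGrp k n)⁻¹
        = (x * y * (PresentedGroup.of 0 : BGrp k n)⁻¹)⁻¹ := by group
      _ = y := by rw [h]; group
  have hc : Commute (x ^ 2) y := by
    have key : x ^ 2 * y * ((PresentedGroup.of 0 : BGrp k n) ^ 2)⁻¹ = y := by
      calc x ^ 2 * y * ((PresentedGroup.of 0 : BGrp k n) ^ 2)⁻¹
          = x * (x * y * (PresentedGroup.of 0 : BGrp k n)⁻¹) * (PresentedGroup.of 0 : BGrp k n)⁻¹ := by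
            rw [sq]; group
        _ = x * (PresentedGroup.of 1 : BGrp k n)⁻¹ * (PresentedGroup.of 0 : BGrp k n)⁻¹ := by rw [h]
        _ = y := hinv
    exact mul_inv_eq_iff_eq_mul.mp key
  exact hc.pow_right j

end BG


/-- For `n = 0`, `B_{2ᵏ·1} ≅ Z/2ᵏ`, and for `k = 2`,
`B_{4(2n+1)} ≅ Q_{4(2n+1)}`. -/
theorem bGrp_degenerate_cases (k n : ℕ) (hk : 2 ≤ k) :
    Nonempty (BGrp k 0 ≃* Multiplicative (ZMod (2 ^ k))) ∧
    Nonempty (BGrp 2 n ≃* QuatGrp (2 * n + 1)) := by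
  constructor
  · -- Part 1
    set N := 2 ^ k with hN
    haveI : NeZero N := ⟨pow_ne_zero _ two_ne_zero⟩
    have hf : ∀ r ∈ bRels k 0,
        FreeGroup.lift ![Multiplicative.ofAdd (1 : ZMod N), 1] r = 1 := by
      intro r hr
      simp only [bRels, Set.mem_insert_iff, Set.mem_singleton_iff] at hr
      rcases hr with rfl | rfl | rfl
      · simp only [map_pow, FreeGroup.lift_apply_of, Matrix.cons_val_zero]
        apply Multiplicative.toAdd.injective
        simp [nsmul_eq_mul]
      · simp
      · simp
    set f : BGrp k 0 →* Multiplicative (ZMod N) := PresentedGroup.toGroup hf with hfdef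
    have hx : (PresentedGroup.of 0 : BGrp k 0) ^ ((N : ℤ)) = 1 := by
      rw [zpow_natCast]; exact b_rel1 k 0
    set φ : ZMod N →+ Additive (BGrp k 0) :=
      ZMod.lift N ⟨zmultiplesHom _ (Additive.ofMul (PresentedGroup.of 0)), by
        simp only [zmultiplesHom_apply]
        rw [← ofMul_zpow, hx, ofMul_one]⟩ with hφdef
    set g : Multiplicative (ZMod N) →* BGrp k 0 := AddMonoidHom.toMultiplicativeLeft φ with hgdef
    have hg1 : g (Multiplicative.ofAdd (1 : ZMod N)) = PresentedGroup.of 0 := by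
      show Additive.toMul (φ (1 : ZMod N)) = _
      have h1 : ((1 : ℤ) : ZMod N) = (1 : ZMod N) := by norm_cast
      rw [hφdef, ← h1, ZMod.lift_coe]
      simp
    have hy1 : (PresentedGroup.of 1 : BGrp k 0) = 1 := by
      have := b_rel2 k 0
      simpa using this
    have c0 : g (f (PresentedGroup.of (0 : Fin 2))) = PresentedGroup.of (0 : Fin 2) := by
      rw [hfdef, PresentedGroup.toGroup.of, Matrix.cons_val_zero]
      exact hg1
    have c1 : g (f (PresentedGroup.of (1 : Fin 2))) = PresentedGroup.of (1 : Fin 2) := by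
      rw [hfdef, PresentedGroup.toGroup.of, Matrix.cons_val_one, Matrix.cons_val_zero, map_one, hy1]
    have hgf : g.comp f = MonoidHom.id _ := by
      apply PresentedGroup.ext
      intro i
      fin_cases i
      · exact c0
      · exact c1
    have hfg : f.comp g = MonoidHom.id _ := by
      apply MonoidHom.ext; intro m
      have hm : (Multiplicative.ofAdd (1 : ZMod N)) ^ (Multiplicative.toAdd m).val = m := by
        apply Multiplicative.toAdd.injective
        simp only [toAdd_pow, toAdd_ofAdd, nsmul_eq_mul, mul_one]
        exact ZMod.natCast_rightInverse (Multiplicative.toAdd m)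
      rw [MonoidHom.comp_apply, MonoidHom.id_apply, ← hm, map_pow, hg1, map_pow]
      congr 1
      rw [hfdef, PresentedGroup.toGroup.of, Matrix.cons_val_zero]
    exact ⟨MonoidHom.toMulEquiv f g hgf hfg⟩
  · -- Part 2
    have hX4 : (PresentedGroup.of 0 : BGrp 2 n) ^ 4 = 1 := by
      have := b_rel1 2 n; norm_num at this; exact this
    have hYm : (PresentedGroup.of 1 : BGrp 2 n) ^ (2 * n + 1) = 1 := b_rel2 2 n
    have hf : ∀ r ∈ bRels 2 n,
        FreeGroup.lift ![(PresentedGroup.of 1 : QuatGrp (2 * n + 1)),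
          (PresentedGroup.of 0 : QuatGrp (2 * n + 1)) ^ 2] r = 1 := by
      intro r hr
      simp only [bRels, Set.mem_insert_iff, Set.mem_singleton_iff] at hr
      rcases hr with rfl | rfl | rfl
      · simp only [map_pow, FreeGroup.lift_apply_of, Matrix.cons_val_zero]
        have := q_b4 (2 * n + 1); norm_num; exact this
      · simp only [map_pow, FreeGroup.lift_apply_of, Matrix.cons_val_one, Matrix.cons_val_zero]
        rw [← pow_mul]
        exact q_a2m (2 * n + 1)
      · simp only [map_mul, map_inv, FreeGroup.lift_apply_of, Matrix.cons_val_zero,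
          Matrix.cons_val_one, Matrix.cons_val_zero]
        rw [q_conj_pow (2 * n + 1) 2]
        group
    have hcomm : Commute ((PresentedGroup.of 0 : BGrp 2 n) ^ 2)
        ((PresentedGroup.of 1 : BGrp 2 n) ^ (n + 1)) := b_central 2 n (n + 1)
    have hcp : (PresentedGroup.of 0 : BGrp 2 n) * PresentedGroup.of 1 ^ (n + 1) *
        (PresentedGroup.of 0 : BGrp 2 n)⁻¹ = ((PresentedGroup.of 1 : BGrp 2 n) ^ (n + 1))⁻¹ :=
      b_conj_pow 2 n (n + 1)
    have hUm : ((PresentedGroup.of 0 : BGrp 2 n) ^ 2 * PresentedGroup.of 1 ^ (n + 1)) ^ (2 * n + 1)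
        = (PresentedGroup.of 0 : BGrp 2 n) ^ 2 := by
      rw [hcomm.mul_pow, ← pow_mul, ← pow_mul]
      have h1 : (PresentedGroup.of 0 : BGrp 2 n) ^ (2 * (2 * n + 1))
          = (PresentedGroup.of 0 : BGrp 2 n) ^ 2 := by
        have h : 2 * (2 * n + 1) = 4 * n + 2 := by omega
        rw [h, pow_add, pow_mul, hX4, one_pow, one_mul]
      have h2 : (PresentedGroup.of 1 : BGrp 2 n) ^ ((n + 1) * (2 * n + 1)) = 1 := by
        rw [mul_comm, pow_mul, hYm, one_pow]
      rw [h1, h2, mul_one]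
    have hg : ∀ r ∈ quaternionRels (2 * n + 1),
        FreeGroup.lift ![(PresentedGroup.of 0 : BGrp 2 n) ^ 2 * PresentedGroup.of 1 ^ (n + 1),
          (PresentedGroup.of 0 : BGrp 2 n)] r = 1 := by
      intro r hr
      simp only [quaternionRels, Set.mem_insert_iff, Set.mem_singleton_iff] at hr
      rcases hr with rfl | rfl
      · simp only [map_mul, map_inv, map_pow, FreeGroup.lift_apply_of, Matrix.cons_val_zero,
          Matrix.cons_val_one, Matrix.cons_val_zero]
        rw [hUm]
        group
      · simp only [map_mul, map_inv, FreeGroup.lift_apply_of, Matrix.cons_val_zero,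
          Matrix.cons_val_one, Matrix.cons_val_zero]
        calc (PresentedGroup.of 0 : BGrp 2 n) ^ 2 * PresentedGroup.of 1 ^ (n + 1) *
              PresentedGroup.of 0 * (PresentedGroup.of 0 ^ 2 * PresentedGroup.of 1 ^ (n + 1)) *
              (PresentedGroup.of 0)⁻¹
            = PresentedGroup.of 0 ^ 2 *
                (PresentedGroup.of 1 ^ (n + 1) * PresentedGroup.of 0 ^ 2) *
                (PresentedGroup.of 0 * PresentedGroup.of 1 ^ (n + 1) *
                  (PresentedGroup.of 0)⁻¹) := by group
          _ = PresentedGroup.of 0 ^ 2 *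
                (PresentedGroup.of 0 ^ 2 * PresentedGroup.of 1 ^ (n + 1)) *
                ((PresentedGroup.of 1 : BGrp 2 n) ^ (n + 1))⁻¹ := by rw [← hcomm.eq, hcp]
          _ = (PresentedGroup.of 0 : BGrp 2 n) ^ 4 := by group
          _ = 1 := hX4
    set f : BGrp 2 n →* QuatGrp (2 * n + 1) := PresentedGroup.toGroup hf with hfdef
    set g : QuatGrp (2 * n + 1) →* BGrp 2 n := PresentedGroup.toGroup hg with hgdef
    have c0 : g (f (PresentedGroup.of (0 : Fin 2))) = PresentedGroup.of (0 : Fin 2) := by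
      rw [hfdef, PresentedGroup.toGroup.of, Matrix.cons_val_zero, hgdef,
        PresentedGroup.toGroup.of, Matrix.cons_val_one, Matrix.cons_val_zero]
    have c1 : g (f (PresentedGroup.of (1 : Fin 2))) = PresentedGroup.of (1 : Fin 2) := by
      rw [hfdef, PresentedGroup.toGroup.of, Matrix.cons_val_one, Matrix.cons_val_zero, map_pow,
        hgdef, PresentedGroup.toGroup.of, Matrix.cons_val_zero]
      rw [hcomm.mul_pow, ← pow_mul, ← pow_mul]
      have h1 : (PresentedGroup.of 0 : BGrp 2 n) ^ (2 * 2) = 1 := by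
        norm_num [hX4]
      have h2 : (PresentedGroup.of 1 : BGrp 2 n) ^ ((n + 1) * 2) = PresentedGroup.of 1 := by
        have h : (n + 1) * 2 = (2 * n + 1) + 1 := by omega
        rw [h, pow_succ, hYm, one_mul]
      rw [h1, h2, one_mul]
    have d0 : f (g (PresentedGroup.of (0 : Fin 2))) = PresentedGroup.of (0 : Fin 2) := by
      rw [hgdef, PresentedGroup.toGroup.of, Matrix.cons_val_zero, map_mul, map_pow, map_pow,
        hfdef, PresentedGroup.toGroup.of, PresentedGroup.toGroup.of, Matrix.cons_val_zero,
        Matrix.cons_val_one, Matrix.cons_val_zero]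
      rw [← q_rel1 (2 * n + 1), ← pow_mul, ← pow_add]
      have h1 : (2 * n + 1) + 2 * (n + 1) = 2 * (2 * n + 1) + 1 := by omega
      rw [h1, pow_succ, pow_mul]
      have h2 : ((PresentedGroup.of 0 : QuatGrp (2 * n + 1)) ^ 2) ^ (2 * n + 1) = 1 := by
        rw [← pow_mul]
        exact q_a2m (2 * n + 1)
      rw [h2, one_mul]
    have d1 : f (g (PresentedGroup.of (1 : Fin 2))) = PresentedGroup.of (1 : Fin 2) := by
      rw [hgdef, PresentedGroup.toGroup.of, Matrix.cons_val_one, Matrix.cons_val_zero,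
        hfdef, PresentedGroup.toGroup.of, Matrix.cons_val_zero]
    have hgf : g.comp f = MonoidHom.id _ := by
      apply PresentedGroup.ext
      intro i
      fin_cases i
      · exact c0
      · exact c1
    have hfg : f.comp g = MonoidHom.id _ := by
      apply PresentedGroup.ext
      intro i
      fin_cases i
      · exact d0
      · exact d1
    exact ⟨MonoidHom.toMulEquiv f g hgf hfg⟩
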